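/- For g ≥ 0, the number of quadruples (a,b,c,d) of non-negative integers satisfying a+b+d > 0, g+1 = a+b+2c+2d, and the constraint (b+d > 0 ⟹ c = 0), equals ⌊(g+4)/2⌋·⌊(g+5)/2⌋ − 2. -/

import Mathlib

/-- For `g ≥ 0`, the number of quadruples `(a,b,c,d)` of non-negative integers
with `a+b+d > 0`, `g+1 = a+b+2c+2d`, and `(b+d > 0 → c = 0)`, equals
`⌊(g+4)/2⌋·⌊(g+5)/2⌋ − 2`. -/
theorem stmt_4 (g : ℕ) :
    Set.ncard {x : ℕ × ℕ × ℕ × ℕ |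
        0 < x.1 + x.2.1 + x.2.2.2 ∧
        g + 1 = x.1 + x.2.1 + 2 * x.2.2.1 + 2 * x.2.2.2 ∧
        (0 < x.2.1 + x.2.2.2 → x.2.2.1 = 0)} =
      (g + 4) / 2 * ((g + 5) / 2) - 2 := by
  classical
  have hS : {x : ℕ × ℕ × ℕ × ℕ |
        0 < x.1 + x.2.1 + x.2.2.2 ∧
        g + 1 = x.1 + x.2.1 + 2 * x.2.2.1 + 2 * x.2.2.2 ∧
        (0 < x.2.1 + x.2.2.2 → x.2.2.1 = 0)} =
      ↑((Finset.range (g+2) ×ˢ Finset.range (g+2) ×ˢ Finset.range (g+2) ×ˢ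
        Finset.range (g+2)).filter (fun x =>
          0 < x.1 + x.2.1 + x.2.2.2 ∧
          g + 1 = x.1 + x.2.1 + 2 * x.2.2.1 + 2 * x.2.2.2 ∧
          (0 < x.2.1 + x.2.2.2 → x.2.2.1 = 0))) := by
    ext ⟨a, b, c, d⟩
    simp only [Finset.coe_filter, Finset.mem_product, Finset.mem_range,
      Set.mem_setOf_eq, Prod.fst, Prod.snd]
    constructor
    · rintro ⟨h1, h2, h3⟩
      exact ⟨⟨by omega, by omega, by omega, by omega⟩, h1, h2, h3⟩
    · rintro ⟨-, h⟩; exact h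
  rw [hS, Set.ncard_coe_finset]
  have hmem : ∀ z : ℕ × ℕ, z ∈
      ((Finset.range ((g+4)/2) ×ˢ Finset.range ((g+5)/2)).erase
        (0, (g+3)/2)).erase ((g+2)/2, g % 2) ↔
      (¬(z.1 = (g+2)/2 ∧ z.2 = g % 2) ∧ ¬(z.1 = 0 ∧ z.2 = (g+3)/2) ∧
        z.1 < (g+4)/2 ∧ z.2 < (g+5)/2) := by
    intro z
    simp only [Finset.mem_erase, Finset.mem_product, Finset.mem_range,
      ne_eq, Prod.ext_iff]
  have hcard : ((Finset.range (g+2) ×ˢ Finset.range (g+2) ×ˢ Finset.range (g+2) ×ˢ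
        Finset.range (g+2)).filter (fun x =>
          0 < x.1 + x.2.1 + x.2.2.2 ∧
          g + 1 = x.1 + x.2.1 + 2 * x.2.2.1 + 2 * x.2.2.2 ∧
          (0 < x.2.1 + x.2.2.2 → x.2.2.1 = 0))).card =
      (((Finset.range ((g+4)/2) ×ˢ Finset.range ((g+5)/2)).erase
        (0, (g+3)/2)).erase ((g+2)/2, g % 2)).card := by
    apply Finset.card_nbij'
      (i := fun x =>
        if 0 < x.2.2.1 then (x.2.2.1, (g+3)/2 - x.2.2.1)
        else if x.2.1 % 2 = 0 then (x.2.1 / 2, x.2.2.2)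
        else ((g+2)/2 - x.2.2.2, (g+3)/2 - x.2.1 / 2))
      (j := fun z =>
        if z.1 + z.2 + 1 ≤ (g+3)/2 then (g + 1 - 2*z.1 - 2*z.2, 2*z.1, 0, z.2)
        else if z.1 + z.2 = (g+3)/2 then (g + 1 - 2*z.1, 0, z.1, 0)
        else (2*(z.1 + z.2) - (g + 4), 2*((g+3)/2 - z.2) + 1, 0, (g+2)/2 - z.1))
    · rintro ⟨a, b, c, d⟩ hx
      simp only [Finset.mem_coe, Finset.mem_filter, Finset.mem_product, Finset.mem_range,
        Prod.fst, Prod.snd] at hx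
      rw [Finset.mem_coe, hmem]
      dsimp only
      split_ifs with h1 h2 <;>
        simp only [Prod.fst, Prod.snd, implies_true, and_true, true_and] at * <;> omega
    · rintro ⟨x, y⟩ hz
      rw [Finset.mem_coe, hmem] at hz
      simp only [Finset.mem_coe, Finset.mem_filter, Finset.mem_product, Finset.mem_range,
        Prod.fst, Prod.snd] at hz ⊢
      split_ifs with h1 h2 <;>
        simp only [Prod.fst, Prod.snd, implies_true, and_true, true_and] <;> omega
    · rintro ⟨a, b, c, d⟩ hx
      simp only [Finset.mem_coe, Finset.mem_filter, Finset.mem_product, Finset.mem_range,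
        Prod.fst, Prod.snd] at hx
      dsimp only
      split_ifs <;>
        simp only [Prod.fst, Prod.snd, Prod.mk.injEq, implies_true, and_true, true_and] at * <;> omega
    · rintro ⟨x, y⟩ hz
      rw [Finset.mem_coe, hmem] at hz
      simp only [Prod.fst, Prod.snd] at hz
      dsimp only
      split_ifs <;>
        simp only [Prod.fst, Prod.snd, Prod.mk.injEq, implies_true, and_true, true_and] at * <;> omega
  rw [hcard]
  have h1 : ((g+2)/2, g % 2) ∈
      (Finset.range ((g+4)/2) ×ˢ Finset.range ((g+5)/2)).erase (0, (g+3)/2) := by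
    simp only [Finset.mem_erase, Finset.mem_product, Finset.mem_range, ne_eq,
      Prod.ext_iff, Prod.fst, Prod.snd]
    omega
  have h2 : ((0 : ℕ), (g+3)/2) ∈ Finset.range ((g+4)/2) ×ˢ Finset.range ((g+5)/2) := by
    simp only [Finset.mem_product, Finset.mem_range, Prod.fst, Prod.snd]
    omega
  rw [Finset.card_erase_of_mem h1, Finset.card_erase_of_mem h2,
    Finset.card_product, Finset.card_range, Finset.card_range, Nat.sub_sub]
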